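/- Let (X,d) be a metric space, (γ_n) a sequence of positive reals, θ : ℕ → ℕ a rate of divergence for ∑_{n=0}^∞ γ_n² = ∞, and φ : [0,∞) → [0,∞) nondecreasing with φ(t) = 0 iff t = 0. Let (T_n) be a family of self-maps of X, b ∈ ℕ with b ≥ 1, p a common fixed point of all T_n, and C the closed ball of center p and radius b. Assume that for every n, T_n is uniformly (P₂) on C with modulus γ_n·φ. Let x ∈ C, let (x_n) be the proximal-point iteration starting at x, and assume condition (C2) holds for (x_n). Then p is the only common fixed point of the family (T_n) lying in C, and (x_n) converges to p with rate of convergence Ψ given by Ψ(k) := θ(b²·(⌈2b/φ(1/(k+1))⌉ + 1)²) + 1. -/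

import Mathlib

open Filter

/-- `T` is uniformly (P₂) on `C` with modulus `φ`. -/
def UniformlyP2 {X : Type*} [MetricSpace X] (T : X → X) (C : Set X) (φ : ℝ → ℝ) : Prop :=
  Set.MapsTo T C C ∧
  ∀ x ∈ C, ∀ y ∈ C, 2 * dist (T x) (T y) ^ 2 ≤
    dist x (T y) ^ 2 + dist y (T x) ^ 2 - dist x (T x) ^ 2 - dist y (T y) ^ 2
      - 2 * φ (dist (T x) (T y))

set_option maxHeartbeats 1000000 in
theorem stmt2
    {X : Type*} [MetricSpace X]
    (γ : ℕ → ℝ) (hγ : ∀ n, 0 < γ n)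
    (θ : ℕ → ℕ) (hθ : ∀ K : ℕ, (K : ℝ) ≤ ∑ n ∈ Finset.range (θ K + 1), γ n ^ 2)
    (φ : ℝ → ℝ) (hφmono : ∀ s t : ℝ, 0 ≤ s → s ≤ t → φ s ≤ φ t)
    (hφnonneg : ∀ t : ℝ, 0 ≤ t → 0 ≤ φ t)
    (hφzero : ∀ t : ℝ, 0 ≤ t → (φ t = 0 ↔ t = 0))
    (T : ℕ → X → X) (b : ℕ) (hb : 1 ≤ b) (p : X) (hp : ∀ n, T n p = p)
    (C : Set X) (hC : C = Metric.closedBall p b)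
    (hUP2 : ∀ n, UniformlyP2 (T n) C (fun t => γ n * φ t))
    (x₀ : X) (hx₀C : x₀ ∈ C)
    (x : ℕ → X) (hx0 : x 0 = x₀) (hx : ∀ n, x (n + 1) = T n (x n))
    (hC2 : ∀ n : ℕ,
      dist (x (n + 1)) (x (n + 2)) / γ (n + 1) ≤ dist (x n) (x (n + 1)) / γ n) :
    (∀ q ∈ C, (∀ n, T n q = q) → q = p) ∧
    (∀ k : ℕ, ∀ n : ℕ,
      θ (b ^ 2 * (⌈(2 * (b : ℝ)) / φ (1 / ((k : ℝ) + 1))⌉₊ + 1) ^ 2) + 1 ≤ n →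
      dist (x n) p ≤ 1 / ((k : ℝ) + 1)) := by
  have hb0 : (0:ℝ) < b := by exact_mod_cast Nat.lt_of_lt_of_le Nat.zero_lt_one hb
  have hpC : p ∈ C := by
    rw [hC, Metric.mem_closedBall, dist_self]; exact le_of_lt hb0
  have hxC : ∀ n, x n ∈ C := by
    intro n
    induction n with
    | zero => rw [hx0]; exact hx₀C
    | succ n ih => rw [hx n]; exact (hUP2 n).1 ih
  have key : ∀ n, dist (x (n+1)) p ^ 2 + dist (x n) (x (n+1)) ^ 2
      + 2 * (γ n * φ (dist (x (n+1)) p)) ≤ dist (x n) p ^ 2 := by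
    intro n
    have h := (hUP2 n).2 (x n) (hxC n) p hpC
    simp only [hp n, ← hx n, dist_self, dist_comm p (x (n+1))] at h
    nlinarith [h]
  have hdb : ∀ n, dist (x n) p ≤ b := by
    intro n
    have := hxC n
    rw [hC, Metric.mem_closedBall] at this
    exact this
  have hmono : ∀ n, dist (x (n+1)) p ≤ dist (x n) p := by
    intro n
    have h := key n
    have h1 : 0 ≤ γ n * φ (dist (x (n+1)) p) :=
      mul_nonneg (le_of_lt (hγ n)) (hφnonneg _ dist_nonneg)
    nlinarith [dist_nonneg (x := x (n+1)) (y := p), dist_nonneg (x := x n) (y := p),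
      sq_nonneg (dist (x n) (x (n+1)))]
  have htel : ∀ N, (∑ n ∈ Finset.range (N+1), dist (x n) (x (n+1)) ^ 2)
      + dist (x (N+1)) p ^ 2 ≤ dist (x 0) p ^ 2 := by
    intro N
    induction N with
    | zero =>
      simp only [zero_add, Finset.sum_range_one]
      have h := key 0
      have h1 : 0 ≤ γ 0 * φ (dist (x 1) p) :=
        mul_nonneg (le_of_lt (hγ 0)) (hφnonneg _ dist_nonneg)
      linarith
    | succ N ih =>
      rw [Finset.sum_range_succ]
      have h := key (N+1)
      have h1 : 0 ≤ γ (N+1) * φ (dist (x (N+2)) p) :=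
        mul_nonneg (le_of_lt (hγ (N+1))) (hφnonneg _ dist_nonneg)
      linarith
  have hsum : ∀ N, ∑ n ∈ Finset.range (N+1), dist (x n) (x (n+1)) ^ 2 ≤ (b:ℝ)^2 := by
    intro N
    have h := htel N
    have h2 : dist (x 0) p ^ 2 ≤ (b:ℝ)^2 := by
      have := hdb 0
      nlinarith [dist_nonneg (x := x 0) (y := p)]
    nlinarith [sq_nonneg (dist (x (N+1)) p)]
  -- the quotient sequence
  set c : ℕ → ℝ := fun n => dist (x n) (x (n+1)) / γ n with hc
  have hcnonneg : ∀ n, 0 ≤ c n := fun n => div_nonneg dist_nonneg (le_of_lt (hγ n))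
  have hcant : ∀ m n, m ≤ n → c n ≤ c m := by
    intro m n hmn
    induction n with
    | zero =>
      have h0 : m = 0 := Nat.le_zero.mp hmn
      subst h0; exact le_rfl
    | succ n ih =>
      rcases Nat.lt_or_ge m (n+1) with h | h
      · exact le_trans (hC2 n) (ih (Nat.lt_succ_iff.mp h))
      · have : m = n+1 := le_antisymm hmn h
        rw [this]
  have hceq : ∀ n, dist (x n) (x (n+1)) = c n * γ n := by
    intro n
    rw [hc]
    exact (div_mul_cancel₀ _ (ne_of_gt (hγ n))).symm
  -- key quantitative bound at N = θ K
  have hcbound : ∀ K : ℕ, (c (θ K))^2 * (K:ℝ) ≤ (b:ℝ)^2 := by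
    intro K
    set N := θ K with hN
    have h1 : ∀ n ∈ Finset.range (N+1), (c N)^2 * γ n ^ 2 ≤ dist (x n) (x (n+1)) ^ 2 := by
      intro n hn
      rw [Finset.mem_range] at hn
      have hcn : c N ≤ c n := hcant n N (Nat.lt_succ_iff.mp hn)
      rw [hceq n, mul_pow]
      have h2 : c N ^ 2 ≤ c n ^ 2 := by nlinarith [hcnonneg N]
      exact mul_le_mul_of_nonneg_right h2 (sq_nonneg _)
    have h2 : (c N)^2 * (∑ n ∈ Finset.range (N+1), γ n ^ 2)
        ≤ ∑ n ∈ Finset.range (N+1), dist (x n) (x (n+1)) ^ 2 := by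
      rw [Finset.mul_sum]
      exact Finset.sum_le_sum h1
    have h3 := hθ K
    have h4 := hsum N
    nlinarith [sq_nonneg (c N)]
  constructor
  · -- uniqueness
    intro q hqC hq
    have h := (hUP2 0).2 q hqC p hpC
    simp only [hp 0, hq 0, dist_self, dist_comm p q] at h
    have hφq : φ (dist q p) ≤ 0 := by
      have := hγ 0
      nlinarith
    have : φ (dist q p) = 0 := le_antisymm hφq (hφnonneg _ dist_nonneg)
    have : dist q p = 0 := (hφzero _ dist_nonneg).mp this
    exact dist_eq_zero.mp this
  · intro k n hn
    set ε : ℝ := 1 / ((k:ℝ) + 1) with hε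
    have hε0 : 0 < ε := by positivity
    have hφε : 0 < φ ε := by
      rcases lt_or_eq_of_le (hφnonneg ε (le_of_lt hε0)) with h | h
      · exact h
      · exfalso
        have := (hφzero ε (le_of_lt hε0)).mp h.symm
        linarith
    set M : ℕ := ⌈(2 * (b:ℝ)) / φ ε⌉₊ with hM
    set K : ℕ := b ^ 2 * (M + 1) ^ 2 with hK
    set N : ℕ := θ K with hNdef
    clear_value N
    -- c N ≤ 1/(M+1)  and  2b ≤ (M+1) φ ε
    have hKcast : (K:ℝ) = (b:ℝ)^2 * ((M:ℝ)+1)^2 := by push_cast [hK]; ring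
    have hc2 : (c N)^2 * ((b:ℝ)^2 * ((M:ℝ)+1)^2) ≤ (b:ℝ)^2 := by
      have := hcbound K
      rw [hKcast] at this
      rw [hNdef]
      exact this
    have hM1 : (0:ℝ) < (M:ℝ) + 1 := by positivity
    have hcN : c N * ((M:ℝ)+1) ≤ 1 := by
      have h5 : (c N * ((M:ℝ)+1))^2 ≤ 1 := by nlinarith [mul_pos hb0 hb0]
      nlinarith [mul_nonneg (hcnonneg N) (le_of_lt hM1)]
    have hMle : 2 * (b:ℝ) ≤ ((M:ℝ)+1) * φ ε := by
      have h1 : (2 * (b:ℝ)) / φ ε ≤ (M:ℝ) := Nat.le_ceil _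
      have h2 : 2 * (b:ℝ) ≤ (M:ℝ) * φ ε := by
        rw [div_le_iff₀ hφε] at h1
        linarith
      nlinarith
    have hstep : 2 * (b:ℝ) * dist (x N) (x (N+1)) ≤ φ ε * γ N := by
      rw [hceq N]
      have h1 : 2 * (b:ℝ) * c N ≤ φ ε := by
        nlinarith [hcnonneg N]
      nlinarith [hγ N, hcnonneg N]
    -- deduce φ (dist (x (N+1)) p) < φ ε
    have hkeyN := key N
    have htri : dist (x N) p ≤ dist (x N) (x (N+1)) + dist (x (N+1)) p := dist_triangle _ _ _
    have hmain : 2 * (γ N * φ (dist (x (N+1)) p)) ≤ φ ε * γ N := by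
      have h1 : dist (x N) p ^ 2 ≤ (dist (x N) (x (N+1)) + dist (x (N+1)) p)^2 :=
        pow_le_pow_left₀ dist_nonneg htri 2
      have h2 : dist (x N) (x (N+1)) * dist (x (N+1)) p ≤ dist (x N) (x (N+1)) * b :=
        mul_le_mul_of_nonneg_left (hdb (N+1)) dist_nonneg
      nlinarith [hkeyN, h1, h2, hstep]
    have hφlt : φ (dist (x (N+1)) p) < φ ε := by
      have hgN := hγ N
      have h6 : 2 * φ (dist (x (N+1)) p) ≤ φ ε := by
        rw [← mul_le_mul_iff_of_pos_right hgN]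
        linarith [hmain]
      linarith [hφnonneg _ (dist_nonneg (x := x (N+1)) (y := p)), hφε]
    have hN1 : dist (x (N+1)) p ≤ ε := by
      by_contra h
      push_neg at h
      exact absurd (hφmono ε (dist (x (N+1)) p) (le_of_lt hε0) (le_of_lt h)) (not_le.mpr hφlt)
    -- propagate
    have hall : ∀ m, dist (x (N+1+m)) p ≤ ε := by
      intro m
      induction m with
      | zero => exact hN1
      | succ m ih => exact le_trans (hmono (N+1+m)) ih
    have hn' : N + 1 ≤ n := hn
    obtain ⟨m, rfl⟩ := Nat.exists_eq_add_of_le hn'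
    exact hall m
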